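/- arXiv:1206.5436 — 4 statements merged into one kernel-verified Lean document; each statement's English description precedes it below -/
import Mathlib

section
/- In a slim semimodular lattice (a finite semimodular lattice whose set of join-irreducible elements contains no three-element antichain), every element has at most two covers. -/
lemma exists_supIrred_le_not_le {L : Type*} [Lattice L] [Fintype L] (x : L) :
    ∀ y : L, ¬ y ≤ x → ∃ p : L, SupIrred p ∧ p ≤ y ∧ ¬ p ≤ x := by
  intro y
  induction y using WellFoundedLT.induction with
  | _ y ih =>
    intro h
    by_cases hy : SupIrred y
    · exact ⟨y, hy, le_rfl, h⟩
    · rw [SupIrred] at hy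
      push_neg at hy
      rcases Classical.em (IsMin y) with hmin | hmin
      · exact absurd ((hmin (inf_le_right (a := x))).trans inf_le_left) h
      · obtain ⟨b, c, hbc, hb, hc⟩ := hy hmin
        have hby : b < y := lt_of_le_of_ne (hbc ▸ le_sup_left) hb
        have hcy : c < y := lt_of_le_of_ne (hbc ▸ le_sup_right) hc
        by_cases hbx : b ≤ x
        · have hcx : ¬ c ≤ x := fun hcx => h (hbc ▸ sup_le hbx hcx)
          obtain ⟨p, hp, hpc, hpx⟩ := ih c hcy hcx
          exact ⟨p, hp, hpc.trans hcy.le, hpx⟩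
        · obtain ⟨p, hp, hpb, hpx⟩ := ih b hby hbx
          exact ⟨p, hp, hpb.trans hby.le, hpx⟩

/-- In a slim semimodular lattice (a finite semimodular lattice whose set of
join-irreducible elements contains no three-element antichain), every element
has at most two covers. -/
theorem stmt_0 {L : Type*} [Lattice L] [Fintype L]
    (semimod : ∀ a b : L, a ⊓ b ⋖ a → b ⋖ a ⊔ b)
    (slim : ¬ ∃ a b c : L, SupIrred a ∧ SupIrred b ∧ SupIrred c ∧
      ¬ a ≤ b ∧ ¬ b ≤ a ∧ ¬ a ≤ c ∧ ¬ c ≤ a ∧ ¬ b ≤ c ∧ ¬ c ≤ b)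
    (x y₁ y₂ y₃ : L) (h₁ : x ⋖ y₁) (h₂ : x ⋖ y₂) (h₃ : x ⋖ y₃) :
    y₁ = y₂ ∨ y₁ = y₃ ∨ y₂ = y₃ := by
  by_contra hcon
  push_neg at hcon
  obtain ⟨h12, h13, h23⟩ := hcon
  -- distinct covers of x meet at x
  have meet : ∀ a b : L, x ⋖ a → x ⋖ b → a ≠ b → a ⊓ b = x := by
    intro a b ha hb hab
    have hxab : x ≤ a ⊓ b := le_inf ha.le hb.le
    rcases hxab.lt_or_eq with hlt | heq
    · exfalso
      have ea : a ⊓ b = a := (inf_le_left).eq_of_not_lt (ha.2 hlt)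
      have eb : a ⊓ b = b := (inf_le_right).eq_of_not_lt (hb.2 hlt)
      exact hab (ea.symm.trans eb)
    · exact heq.symm
  obtain ⟨p₁, hp₁, hp₁y, hp₁x⟩ := exists_supIrred_le_not_le x y₁ (fun h => h₁.lt.not_ge h)
  obtain ⟨p₂, hp₂, hp₂y, hp₂x⟩ := exists_supIrred_le_not_le x y₂ (fun h => h₂.lt.not_ge h)
  obtain ⟨p₃, hp₃, hp₃y, hp₃x⟩ := exists_supIrred_le_not_le x y₃ (fun h => h₃.lt.not_ge h)
  have key : ∀ (p q : L) (a b : L), x ⋖ a → x ⋖ b → a ≠ b → p ≤ a → ¬ p ≤ x → q ≤ b → p ≤ q → False := by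
    intro p q a b ha hb hab hpa hpx hqb hpq
    exact hpx (le_trans (le_inf hpa (hpq.trans hqb)) (le_of_eq (meet a b ha hb hab)))
  exact slim ⟨p₁, p₂, p₃, hp₁, hp₂, hp₃,
    fun h => key p₁ p₂ y₁ y₂ h₁ h₂ h12 hp₁y hp₁x hp₂y h,
    fun h => key p₂ p₁ y₂ y₁ h₂ h₁ h12.symm hp₂y hp₂x hp₁y h,
    fun h => key p₁ p₃ y₁ y₃ h₁ h₃ h13 hp₁y hp₁x hp₃y h,
    fun h => key p₃ p₁ y₃ y₁ h₃ h₁ h13.symm hp₃y hp₃x hp₁y h,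
    fun h => key p₂ p₃ y₂ y₃ h₂ h₃ h23 hp₂y hp₂x hp₃y h,
    fun h => key p₃ p₂ y₃ y₂ h₃ h₂ h23.symm hp₃y hp₃x hp₂y h⟩
end

section
/- Every slim finite lattice is planar, in the sense that its order can be embedded so that its Hasse diagram admits a planar drawing; concretely, a finite lattice whose join-irreducible elements form the union of two chains has order dimension at most 2. -/
open Finset

section Dilworth

variable {α : Type*} [PartialOrder α] [DecidableEq α]

/-- Auxiliary step: given a maximal element `a` of `S`, a decomposition of `S.erase a`
into two chains `C₁ ∪ C₂`, and an element `a₁` with `a₁ ≤ a` dominating every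
element of `C₁` lying in some 2-antichain of `S.erase a`, the set `S` decomposes
into two chains. -/
lemma dilworth_aux (S : Finset α) (a : α) (haS : a ∈ S)
    (C₁ C₂ : Finset α) (hun : C₁ ∪ C₂ = S.erase a)
    (hc₁ : ∀ x ∈ C₁, ∀ y ∈ C₁, x ≤ y ∨ y ≤ x)
    (hc₂ : ∀ x ∈ C₂, ∀ y ∈ C₂, x ≤ y ∨ y ≤ x)
    (a₁ : α) (ha₁a : a₁ ≤ a)
    (hmax1 : ∀ x ∈ C₁, (∃ y ∈ S.erase a, ¬x ≤ y ∧ ¬y ≤ x) → x ≤ a₁) :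
    ∃ D₁ D₂ : Finset α, D₁ ∪ D₂ = S ∧
      (∀ x ∈ D₁, ∀ y ∈ D₁, x ≤ y ∨ y ≤ x) ∧ (∀ x ∈ D₂, ∀ y ∈ D₂, x ≤ y ∨ y ≤ x) := by
  classical
  set C : Finset α := insert a (C₁.filter (· ≤ a₁)) with hC
  have hCsub : C ⊆ S := by
    intro z hz
    rw [hC, mem_insert] at hz
    rcases hz with rfl | hz
    · exact haS
    · have hz1 : z ∈ C₁ := (mem_filter.mp hz).1
      have : z ∈ S.erase a := hun ▸ mem_union_left _ hz1
      exact mem_of_mem_erase this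
  refine ⟨C, S \ C, union_sdiff_of_subset hCsub, ?_, ?_⟩
  · -- C is a chain
    intro x hx y hy
    rw [hC, mem_insert] at hx hy
    rcases hx with rfl | hx
    · rcases hy with rfl | hy
      · exact Or.inl le_rfl
      · exact Or.inr ((mem_filter.mp hy).2.trans ha₁a)
    · rcases hy with rfl | hy
      · exact Or.inl ((mem_filter.mp hx).2.trans ha₁a)
      · exact hc₁ x (mem_filter.mp hx).1 y (mem_filter.mp hy).1
  · -- S \ C is a chain
    intro x hx y hy
    by_contra hcon
    push_neg at hcon
    obtain ⟨hxy, hyx⟩ := hcon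
    have hxC : x ∉ C := (mem_sdiff.mp hx).2
    have hyC : y ∉ C := (mem_sdiff.mp hy).2
    have hxa : x ≠ a := fun h => hxC (h ▸ mem_insert_self a _)
    have hya : y ≠ a := fun h => hyC (h ▸ mem_insert_self a _)
    have hxE : x ∈ S.erase a := mem_erase.mpr ⟨hxa, (mem_sdiff.mp hx).1⟩
    have hyE : y ∈ S.erase a := mem_erase.mpr ⟨hya, (mem_sdiff.mp hy).1⟩
    have hx2 : x ∈ C₂ := by
      rcases mem_union.mp (hun ▸ hxE) with h1 | h2
      · have h' : x ∈ C₁.filter (· ≤ a₁) := mem_filter.mpr ⟨h1, hmax1 x h1 ⟨y, hyE, hxy, hyx⟩⟩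
        exact absurd (mem_insert_of_mem h') hxC
      · exact h2
    have hy2 : y ∈ C₂ := by
      rcases mem_union.mp (hun ▸ hyE) with h1 | h2
      · have h' : y ∈ C₁.filter (· ≤ a₁) := mem_filter.mpr ⟨h1, hmax1 y h1 ⟨x, hxE, hyx, hxy⟩⟩
        exact absurd (mem_insert_of_mem h') hyC
      · exact h2
    rcases hc₂ x hx2 y hy2 with h | h
    · exact hxy h
    · exact hyx h

/-- Width-2 Dilworth theorem: a finite set with no 3-element antichain
is the union of two chains. -/
lemma dilworth_two (S : Finset α)
    (h : ∀ a ∈ S, ∀ b ∈ S, ∀ c ∈ S,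
      ¬a ≤ b → ¬b ≤ a → ¬a ≤ c → ¬c ≤ a → ¬b ≤ c → ¬c ≤ b → False) :
    ∃ C₁ C₂ : Finset α, C₁ ∪ C₂ = S ∧
      (∀ x ∈ C₁, ∀ y ∈ C₁, x ≤ y ∨ y ≤ x) ∧ (∀ x ∈ C₂, ∀ y ∈ C₂, x ≤ y ∨ y ≤ x) := by
  classical
  induction S using Finset.strongInduction with
  | _ S ih =>
  rcases S.eq_empty_or_nonempty with rfl | hS
  · exact ⟨∅, ∅, by simp, by simp, by simp⟩
  obtain ⟨a, haS, hamax⟩ := S.exists_maximal hS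
  have hsub : S.erase a ⊆ S := erase_subset _ _
  obtain ⟨C₁, C₂, hun, hc₁, hc₂⟩ := ih (S.erase a) (erase_ssubset haS)
    (fun x hx y hy z hz => h x (hsub hx) y (hsub hy) z (hsub hz))
  by_cases hchain : ∀ x ∈ S.erase a, ∀ y ∈ S.erase a, x ≤ y ∨ y ≤ x
  · refine ⟨{a}, S.erase a, ?_, ?_, hchain⟩
    · rw [← insert_eq, insert_erase haS]
    · intro x hx y hy
      rw [mem_singleton] at hx hy
      subst hx; subst hy; exact Or.inl le_rfl
  -- there is a 2-antichain in S.erase a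
  push_neg at hchain
  obtain ⟨u, hu, v, hv, huv, hvu⟩ := hchain
  -- the sets of elements of C₁ (resp. C₂) lying in some 2-antichain
  set P : α → Prop := fun x => ∃ y ∈ S.erase a, ¬x ≤ y ∧ ¬y ≤ x with hP
  have hT₁ : (C₁.filter P).Nonempty := by
    rcases mem_union.mp (hun ▸ hu) with h1 | h2
    · exact ⟨u, mem_filter.mpr ⟨h1, v, hv, huv, hvu⟩⟩
    · rcases mem_union.mp (hun ▸ hv) with h1' | h2'
      · exact ⟨v, mem_filter.mpr ⟨h1', u, hu, hvu, huv⟩⟩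
      · rcases hc₂ u h2 v h2' with h | h
        · exact absurd h huv
        · exact absurd h hvu
  have hT₂ : (C₂.filter P).Nonempty := by
    rcases mem_union.mp (hun ▸ hu) with h1 | h2
    · rcases mem_union.mp (hun ▸ hv) with h1' | h2'
      · rcases hc₁ u h1 v h1' with h | h
        · exact absurd h huv
        · exact absurd h hvu
      · exact ⟨v, mem_filter.mpr ⟨h2', u, hu, hvu, huv⟩⟩
    · exact ⟨u, mem_filter.mpr ⟨h2, v, hv, huv, hvu⟩⟩
  obtain ⟨a₁, ha₁T, ha₁max⟩ := (C₁.filter P).exists_maximal hT₁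
  obtain ⟨a₂, ha₂T, ha₂max⟩ := (C₂.filter P).exists_maximal hT₂
  have ha₁C : a₁ ∈ C₁ := (mem_filter.mp ha₁T).1
  have ha₂C : a₂ ∈ C₂ := (mem_filter.mp ha₂T).1
  have ha₁E : a₁ ∈ S.erase a := hun ▸ mem_union_left _ ha₁C
  have ha₂E : a₂ ∈ S.erase a := hun ▸ mem_union_right _ ha₂C
  -- elements of the filters are below the maximal ones, since chains
  have hdom1 : ∀ x ∈ C₁, P x → x ≤ a₁ := by
    intro x hx hPx
    rcases hc₁ x hx a₁ ha₁C with h | h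
    · exact h
    · rcases eq_or_lt_of_le h with rfl | hlt
      · exact le_rfl
      · exact absurd (hlt.trans_le (ha₁max (mem_filter.mpr ⟨hx, hPx⟩) hlt.le)) (lt_irrefl _)
  have hdom2 : ∀ x ∈ C₂, P x → x ≤ a₂ := by
    intro x hx hPx
    rcases hc₂ x hx a₂ ha₂C with h | h
    · exact h
    · rcases eq_or_lt_of_le h with rfl | hlt
      · exact le_rfl
      · exact absurd (hlt.trans_le (ha₂max (mem_filter.mpr ⟨hx, hPx⟩) hlt.le)) (lt_irrefl _)
  -- a₁ and a₂ are incomparable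
  have ha₁₂ : ¬a₁ ≤ a₂ := by
    intro hle
    obtain ⟨c, hcE, hc1, hc2'⟩ := (mem_filter.mp ha₂T).2
    have hcC₁ : c ∈ C₁ := by
      rcases mem_union.mp (hun ▸ hcE) with h1 | h2
      · exact h1
      · rcases hc₂ a₂ ha₂C c h2 with h | h
        · exact absurd h hc1
        · exact absurd h hc2'
    have : c ≤ a₁ := hdom1 c hcC₁ ⟨a₂, ha₂E, hc2', hc1⟩
    exact hc2' (this.trans hle)
  have ha₂₁ : ¬a₂ ≤ a₁ := by
    intro hle
    obtain ⟨c, hcE, hc1, hc2'⟩ := (mem_filter.mp ha₁T).2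
    have hcC₂ : c ∈ C₂ := by
      rcases mem_union.mp (hun ▸ hcE) with h1 | h2
      · rcases hc₁ a₁ ha₁C c h1 with h | h
        · exact absurd h hc1
        · exact absurd h hc2'
      · exact h2
    have : c ≤ a₂ := hdom2 c hcC₂ ⟨a₁, ha₁E, hc2', hc1⟩
    exact hc2' (this.trans hle)
  -- a is not below a₁ or a₂ (by maximality of a)
  have hna₁ : ¬a ≤ a₁ := by
    intro hle
    exact lt_irrefl _ ((lt_of_le_of_ne hle (fun h => (mem_erase.mp ha₁E).1 h.symm)).trans_le
      (hamax (mem_of_mem_erase ha₁E) hle))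
  have hna₂ : ¬a ≤ a₂ := by
    intro hle
    exact lt_irrefl _ ((lt_of_le_of_ne hle (fun h => (mem_erase.mp ha₂E).1 h.symm)).trans_le
      (hamax (mem_of_mem_erase ha₂E) hle))
  -- a₁ ≤ a or a₂ ≤ a, otherwise {a, a₁, a₂} would be a 3-antichain
  by_cases h1a : a₁ ≤ a
  · exact dilworth_aux S a haS C₁ C₂ hun hc₁ hc₂ a₁ h1a
      (fun x hx hPx => hdom1 x hx hPx)
  by_cases h2a : a₂ ≤ a
  · exact dilworth_aux S a haS C₂ C₁ (by rw [union_comm]; exact hun) hc₂ hc₁ a₂ h2a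
      (fun x hx hPx => hdom2 x hx hPx)
  exact absurd (h a haS a₁ (mem_of_mem_erase ha₁E) a₂ (mem_of_mem_erase ha₂E)
    hna₁ h1a hna₂ h2a ha₁₂ ha₂₁) (fun f => f)

end Dilworth

/-- In a finite (well-founded) lattice, `a ≤ b` as soon as every sup-irreducible
element below `a` is below `b`. -/
lemma le_of_forall_supIrred_le {L : Type*} [Lattice L] [Fintype L] (b : L) :
    ∀ a : L, (∀ j : L, SupIrred j → j ≤ a → j ≤ b) → a ≤ b := by
  intro a
  induction a using WellFoundedLT.induction with
  | ind a ih =>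
    intro H
    by_cases hi : SupIrred a
    · exact H a hi le_rfl
    rw [not_supIrred] at hi
    rcases hi with hm | ⟨u, v, huv, hu, hv⟩
    · exact le_trans (hm inf_le_left) inf_le_right
    · have hub : u ≤ b := ih u hu (fun j hj hja => H j hj (hja.trans hu.le))
      have hvb : v ≤ b := ih v hv (fun j hj hja => H j hj (hja.trans hv.le))
      calc a = u ⊔ v := huv.symm
        _ ≤ b := sup_le hub hvb

/-- In a chain, the "downsets" `{z ∈ C | z ≤ x}` are totally ordered by inclusion,
so a cardinality inequality forces an inclusion. -/
lemma chain_filter_subset {α : Type*} [PartialOrder α] [DecidableEq α]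
    [DecidableRel ((· ≤ ·) : α → α → Prop)]
    (C : Finset α) (hc : ∀ p ∈ C, ∀ q ∈ C, p ≤ q ∨ q ≤ p) (x y : α)
    (hcard : (C.filter (· ≤ x)).card ≤ (C.filter (· ≤ y)).card) :
    C.filter (· ≤ x) ⊆ C.filter (· ≤ y) := by
  by_cases hsub : C.filter (· ≤ x) ⊆ C.filter (· ≤ y)
  · exact hsub
  obtain ⟨c, hcx, hcy⟩ := Finset.not_subset.mp hsub
  have hcC : c ∈ C := (Finset.mem_filter.mp hcx).1
  have hcx' : c ≤ x := (Finset.mem_filter.mp hcx).2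
  have hcny : ¬c ≤ y := fun h => hcy (Finset.mem_filter.mpr ⟨hcC, h⟩)
  have hsub2 : C.filter (· ≤ y) ⊆ C.filter (· ≤ x) := by
    intro z hz
    have hzC : z ∈ C := (Finset.mem_filter.mp hz).1
    have hzy : z ≤ y := (Finset.mem_filter.mp hz).2
    rcases hc z hzC c hcC with h | h
    · exact Finset.mem_filter.mpr ⟨hzC, h.trans hcx'⟩
    · exact absurd (h.trans hzy) hcny
  rw [Finset.eq_of_subset_of_card_le hsub2 hcard]

/-- Every slim finite lattice has order dimension at most 2: a finite lattice
whose join-irreducible elements contain no three-element antichain (equivalently,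
form the union of two chains) order-embeds into a product of two finite chains. -/
theorem stmt_10 {L : Type*} [Lattice L] [Fintype L]
    (slim : ¬ ∃ a b c : L, SupIrred a ∧ SupIrred b ∧ SupIrred c ∧
      ¬ a ≤ b ∧ ¬ b ≤ a ∧ ¬ a ≤ c ∧ ¬ c ≤ a ∧ ¬ b ≤ c ∧ ¬ c ≤ b) :
    ∃ (m n : ℕ) (f : L → Fin m × Fin n), ∀ x y : L, x ≤ y ↔ f x ≤ f y := by
  classical
  set J : Finset L := Finset.univ.filter (fun j => SupIrred j) with hJ
  obtain ⟨C₁, C₂, hun, hc₁, hc₂⟩ := dilworth_two J (by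
    intro a ha b hb c hc hab hba hac hca hbc hcb
    exact slim ⟨a, b, c, (Finset.mem_filter.mp ha).2, (Finset.mem_filter.mp hb).2,
      (Finset.mem_filter.mp hc).2, hab, hba, hac, hca, hbc, hcb⟩)
  refine ⟨C₁.card + 1, C₂.card + 1, fun x =>
    (⟨(C₁.filter (· ≤ x)).card,
        Nat.lt_succ_of_le (Finset.card_le_card (Finset.filter_subset _ _))⟩,
     ⟨(C₂.filter (· ≤ x)).card,
        Nat.lt_succ_of_le (Finset.card_le_card (Finset.filter_subset _ _))⟩),
    fun x y => ?_⟩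
  constructor
  · intro hxy
    constructor <;>
    · simp only [Fin.mk_le_mk]
      refine Finset.card_le_card ?_
      intro z hz
      exact Finset.mem_filter.mpr
        ⟨(Finset.mem_filter.mp hz).1, (Finset.mem_filter.mp hz).2.trans hxy⟩
  · rintro ⟨h1, h2⟩
    simp only [Fin.mk_le_mk] at h1 h2
    have hs1 := chain_filter_subset C₁ hc₁ x y h1
    have hs2 := chain_filter_subset C₂ hc₂ x y h2
    apply le_of_forall_supIrred_le y x
    intro j hj hjx
    have hjJ : j ∈ J := Finset.mem_filter.mpr ⟨Finset.mem_univ j, hj⟩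
    rcases Finset.mem_union.mp (hun ▸ hjJ) with h | h
    · exact (Finset.mem_filter.mp (hs1 (Finset.mem_filter.mpr ⟨h, hjx⟩))).2
    · exact (Finset.mem_filter.mp (hs2 (Finset.mem_filter.mpr ⟨h, hjx⟩))).2
end

section
/- Every finite distributive lattice whose join-irreducible elements form the union of two chains embeds as a cover-preserving sublattice into a product of two finite chains (a grid). -/
/-- Every finite distributive lattice whose join-irreducible elements form the
union of two chains embeds as a cover-preserving sublattice into a grid, i.e.,
a product of two finite chains. -/
theorem stmt_14 {D : Type*} [DistribLattice D] [Fintype D]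
    (hJi : ∃ C₁ C₂ : Set D, IsChain (· ≤ ·) C₁ ∧ IsChain (· ≤ ·) C₂ ∧
      {a : D | SupIrred a} = C₁ ∪ C₂) :
    ∃ (m n : ℕ) (f : D → Fin m × Fin n), Function.Injective f ∧
      (∀ x y : D, f (x ⊔ y) = f x ⊔ f y) ∧
      (∀ x y : D, f (x ⊓ y) = f x ⊓ f y) ∧
      (∀ x y : D, x ⋖ y → f x ⋖ f y) := by
  classical
  obtain ⟨C₁, C₂, hc₁, hc₂, hJ⟩ := hJi
  set K₂ : Set D := C₂ \ C₁ with hK₂def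
  have hc₂' : IsChain (· ≤ ·) K₂ := hc₂.mono Set.diff_subset
  have hJ' : {a : D | SupIrred a} = C₁ ∪ K₂ := by
    rw [hJ, hK₂def, Set.union_diff_self]
  have hC₁J : ∀ a ∈ C₁, SupIrred a := by
    intro a ha; have : a ∈ C₁ ∪ K₂ := Or.inl ha; rw [← hJ'] at this; exact this
  have hK₂J : ∀ a ∈ K₂, SupIrred a := by
    intro a ha; have : a ∈ C₁ ∪ K₂ := Or.inr ha; rw [← hJ'] at this; exact this
  set S : Set D → D → Finset D :=
    fun C x => Finset.univ.filter (fun a => a ∈ C ∧ a ≤ x) with hSdef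
  have hmem : ∀ (C : Set D) (x a : D), a ∈ S C x ↔ a ∈ C ∧ a ≤ x := by
    intro C x a; simp [hSdef]
  have hmono : ∀ (C : Set D) {x y : D}, x ≤ y → S C x ⊆ S C y := by
    intro C x y hxy a ha
    rw [hmem] at ha ⊢
    exact ⟨ha.1, ha.2.trans hxy⟩
  -- downsets of a chain are comparable
  have comp : ∀ (C : Set D), IsChain (· ≤ ·) C → ∀ x y : D,
      S C x ⊆ S C y ∨ S C y ⊆ S C x := by
    intro C hC x y
    by_cases h : S C x ⊆ S C y
    · exact Or.inl h
    · right
      obtain ⟨s, hsx, hsy⟩ := Finset.not_subset.1 h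
      rw [hmem] at hsx
      intro t ht
      rw [hmem] at ht ⊢
      refine ⟨ht.1, ?_⟩
      rcases eq_or_ne s t with rfl | hne
      · exact absurd ((hmem C y s).2 ht) hsy
      · rcases hC hsx.1 ht.1 hne with h' | h'
        · exact absurd ((hmem C y s).2 ⟨hsx.1, h'.trans ht.2⟩) hsy
        · exact h'.trans hsx.2
  -- sup and inf behaviour
  have hsupS : ∀ (C : Set D), (∀ a ∈ C, SupIrred a) → ∀ x y : D,
      S C (x ⊔ y) = S C x ∪ S C y := by
    intro C hCs x y
    ext a
    simp only [hmem, Finset.mem_union]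
    constructor
    · rintro ⟨haC, hle⟩
      rcases (supPrime_iff_supIrred.2 (hCs a haC)).le_sup.1 hle with h | h
      · exact Or.inl ⟨haC, h⟩
      · exact Or.inr ⟨haC, h⟩
    · rintro (⟨h1, h2⟩ | ⟨h1, h2⟩)
      · exact ⟨h1, h2.trans le_sup_left⟩
      · exact ⟨h1, h2.trans le_sup_right⟩
  have hinfS : ∀ (C : Set D) (x y : D), S C (x ⊓ y) = S C x ∩ S C y := by
    intro C x y
    ext a
    simp only [hmem, Finset.mem_inter, le_inf_iff]
    tauto
  have hcardsup : ∀ (C : Set D), IsChain (· ≤ ·) C → (∀ a ∈ C, SupIrred a) →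
      ∀ x y : D, (S C (x ⊔ y)).card = max (S C x).card (S C y).card := by
    intro C hC hCs x y
    rw [hsupS C hCs x y]
    rcases comp C hC x y with h | h
    · rw [Finset.union_eq_right.2 h, max_eq_right (Finset.card_le_card h)]
    · rw [Finset.union_eq_left.2 h, max_eq_left (Finset.card_le_card h)]
  have hcardinf : ∀ (C : Set D), IsChain (· ≤ ·) C →
      ∀ x y : D, (S C (x ⊓ y)).card = min (S C x).card (S C y).card := by
    intro C hC x y
    rw [hinfS C x y]
    rcases comp C hC x y with h | h
    · rw [Finset.inter_eq_left.2 h, min_eq_left (Finset.card_le_card h)]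
    · rw [Finset.inter_eq_right.2 h, min_eq_right (Finset.card_le_card h)]
  -- every element is determined by the sup-irreducibles below it
  have hle_of : ∀ {x y : D}, (∀ a : D, SupIrred a → a ≤ x → a ≤ y) → x ≤ y := by
    have : ∀ x y : D, (∀ a : D, SupIrred a → a ≤ x → a ≤ y) → x ≤ y := by
      intro x
      induction x using WellFoundedLT.induction with
      | _ x ih =>
        intro y h
        by_cases hx : SupIrred x
        · exact h x hx le_rfl
        · rw [not_supIrred] at hx
          rcases hx with hx | ⟨b, c, rfl, hb, hc⟩
          · exact (hx inf_le_left).trans inf_le_right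
          · exact sup_le
              (ih b hb y fun a ha hab => h a ha (hab.trans le_sup_left))
              (ih c hc y fun a ha hac => h a ha (hac.trans le_sup_right))
    exact fun {x y} h => this x y h
  -- uniqueness of the new sup-irreducible in a covering
  have hcov : ∀ {x y : D}, x ⋖ y →
      ∃ a : D, (SupIrred a ∧ a ≤ y ∧ ¬a ≤ x) ∧
        ∀ b : D, SupIrred b → b ≤ y → ¬b ≤ x → b = a := by
    intro x y hc
    have h1 : ∃ a : D, SupIrred a ∧ a ≤ y ∧ ¬a ≤ x := by
      by_contra h
      push_neg at h
      exact absurd (hle_of fun a ha hay => h a ha hay) hc.lt.not_ge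
    obtain ⟨a, ha, hay, hax⟩ := h1
    have hsup_eq : ∀ c : D, SupIrred c → c ≤ y → ¬c ≤ x → x ⊔ c = y := by
      intro c _ hcy hcx
      rcases hc.eq_or_eq le_sup_left (sup_le hc.lt.le hcy) with h | h
      · exact absurd (h ▸ le_sup_right) hcx
      · exact h
    refine ⟨a, ⟨ha, hay, hax⟩, ?_⟩
    intro b hb hby hbx
    have hba : b ≤ a :=
      ((supPrime_iff_supIrred.2 hb).le_sup.1
        ((hsup_eq a ha hay hax) ▸ hby)).resolve_left hbx
    have hab : a ≤ b :=
      ((supPrime_iff_supIrred.2 ha).le_sup.1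
        ((hsup_eq b hb hby hbx) ▸ hay)).resolve_left hax
    exact le_antisymm hba hab
  -- cover means exactly one coordinate jumps by one
  have hScases : ∀ {x y : D}, x ⋖ y →
      ((S C₁ y).card = (S C₁ x).card + 1 ∧ (S K₂ y).card = (S K₂ x).card) ∨
      ((S C₁ y).card = (S C₁ x).card ∧ (S K₂ y).card = (S K₂ x).card + 1) := by
    intro x y hc
    obtain ⟨a, ⟨ha, hay, hax⟩, huniq⟩ := hcov hc
    have haJ : a ∈ C₁ ∪ K₂ := by rw [← hJ']; exact ha
    have hinsert : ∀ (C : Set D), (∀ b ∈ C, SupIrred b) → a ∈ C →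
        S C y = insert a (S C x) := by
      intro C hCs haC
      ext c
      simp only [hmem, Finset.mem_insert]
      constructor
      · rintro ⟨hcC, hcy⟩
        by_cases hcx : c ≤ x
        · exact Or.inr ⟨hcC, hcx⟩
        · exact Or.inl (huniq c (hCs c hcC) hcy hcx)
      · rintro (rfl | ⟨h1, h2⟩)
        · exact ⟨haC, hay⟩
        · exact ⟨h1, h2.trans hc.lt.le⟩
    have hsame : ∀ (C : Set D), (∀ b ∈ C, SupIrred b) → a ∉ C →
        S C y = S C x := by
      intro C hCs haC
      apply le_antisymm _ (hmono C hc.lt.le)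
      intro c hcy
      rw [hmem] at hcy ⊢
      refine ⟨hcy.1, ?_⟩
      by_cases hcx : c ≤ x
      · exact hcx
      · exact absurd (huniq c (hCs c hcy.1) hcy.2 hcx ▸ hcy.1) haC
    have hcard_insert : ∀ (C : Set D), (∀ b ∈ C, SupIrred b) → a ∈ C →
        (S C y).card = (S C x).card + 1 := by
      intro C hCs haC
      rw [hinsert C hCs haC, Finset.card_insert_of_notMem]
      intro hmem'
      exact hax ((hmem C x a).1 hmem').2
    rcases haC : haJ with h | h
    · left
      refine ⟨hcard_insert C₁ hC₁J h, ?_⟩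
      rw [hsame K₂ hK₂J (fun hk => hk.2 h)]
    · right
      refine ⟨?_, hcard_insert K₂ hK₂J h⟩
      rw [hsame C₁ hC₁J h.2]
  -- assemble
  have hbound : ∀ (C : Set D) (x : D), (S C x).card < Fintype.card D + 1 :=
    fun C x => Nat.lt_succ_of_le (Finset.card_le_univ _)
  refine ⟨Fintype.card D + 1, Fintype.card D + 1,
    fun x => (⟨(S C₁ x).card, hbound C₁ x⟩, ⟨(S K₂ x).card, hbound K₂ x⟩),
    ?_, ?_, ?_, ?_⟩
  · -- injectivity
    intro x y h
    have h1 : (S C₁ x).card = (S C₁ y).card := congrArg (Fin.val ∘ Prod.fst) h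
    have h2 : (S K₂ x).card = (S K₂ y).card := congrArg (Fin.val ∘ Prod.snd) h
    have e1 : S C₁ x = S C₁ y := by
      rcases comp C₁ hc₁ x y with hs | hs
      · exact Finset.eq_of_subset_of_card_le hs h1.ge
      · exact (Finset.eq_of_subset_of_card_le hs h1.le).symm
    have e2 : S K₂ x = S K₂ y := by
      rcases comp K₂ hc₂' x y with hs | hs
      · exact Finset.eq_of_subset_of_card_le hs h2.ge
      · exact (Finset.eq_of_subset_of_card_le hs h2.le).symm
    have key : ∀ {u v : D}, S C₁ u = S C₁ v → S K₂ u = S K₂ v → u ≤ v := by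
      intro u v e1 e2
      apply hle_of
      intro a ha hau
      have : a ∈ C₁ ∪ K₂ := by rw [← hJ']; exact ha
      rcases this with hC | hK
      · have : a ∈ S C₁ v := e1 ▸ (hmem C₁ u a).2 ⟨hC, hau⟩
        exact ((hmem C₁ v a).1 this).2
      · have : a ∈ S K₂ v := e2 ▸ (hmem K₂ u a).2 ⟨hK, hau⟩
        exact ((hmem K₂ v a).1 this).2
    exact le_antisymm (key e1 e2) (key e1.symm e2.symm)
  · -- sup
    intro x y
    have hfin : ∀ (a b : Fin (Fintype.card D + 1)), (a ⊔ b).val = max a.val b.val := by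
      intro a b
      rcases le_total a b with h | h
      · rw [sup_eq_right.2 h, max_eq_right (Fin.le_def.1 h)]
      · rw [sup_eq_left.2 h, max_eq_left (Fin.le_def.1 h)]
    refine Prod.ext (Fin.ext ?_) (Fin.ext ?_)
    · show (S C₁ (x ⊔ y)).card = (_ ⊔ _ : Fin _).val
      rw [hfin]
      exact hcardsup C₁ hc₁ hC₁J x y
    · show (S K₂ (x ⊔ y)).card = (_ ⊔ _ : Fin _).val
      rw [hfin]
      exact hcardsup K₂ hc₂' hK₂J x y
  · -- inf
    intro x y
    have hfin : ∀ (a b : Fin (Fintype.card D + 1)), (a ⊓ b).val = min a.val b.val := by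
      intro a b
      rcases le_total a b with h | h
      · rw [inf_eq_left.2 h, min_eq_left (Fin.le_def.1 h)]
      · rw [inf_eq_right.2 h, min_eq_right (Fin.le_def.1 h)]
    refine Prod.ext (Fin.ext ?_) (Fin.ext ?_)
    · show (S C₁ (x ⊓ y)).card = (_ ⊓ _ : Fin _).val
      rw [hfin]
      exact hcardinf C₁ hc₁ x y
    · show (S K₂ (x ⊓ y)).card = (_ ⊓ _ : Fin _).val
      rw [hfin]
      exact hcardinf K₂ hc₂' x y
  · -- covers
    intro x y hc
    have hfincov : ∀ (a b : Fin (Fintype.card D + 1)), b.val = a.val + 1 → a ⋖ b := by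
      intro a b hab
      refine ⟨?_, ?_⟩
      · rw [Fin.lt_def]; omega
      · intro c h1 h2
        rw [Fin.lt_def] at h1 h2
        omega
    rcases hScases hc with ⟨h1, h2⟩ | ⟨h1, h2⟩
    · have e2 : (⟨(S K₂ y).card, hbound K₂ y⟩ : Fin (Fintype.card D + 1)) =
          ⟨(S K₂ x).card, hbound K₂ x⟩ := Fin.ext h2
      dsimp only
      rw [e2]
      exact Prod.mk_covBy_mk_iff_left.2 (hfincov _ _ h1)
    · have e1 : (⟨(S C₁ y).card, hbound C₁ y⟩ : Fin (Fintype.card D + 1)) =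
          ⟨(S C₁ x).card, hbound C₁ x⟩ := Fin.ext h1
      dsimp only
      rw [e1]
      exact Prod.mk_covBy_mk_iff_right.2 (hfincov _ _ h2)
end

section
/- Let L be a finite slim semimodular lattice and let x ∈ L be doubly irreducible (x has exactly one lower cover x_* and exactly one upper cover x^*) with x incomparable to some element of L. Then L \ {x} is a cover-preserving sublattice of L and is again slim and semimodular. -/
private lemma aux_exists_maximal {α : Type*} [Preorder α] (s : Finset α) (h : s.Nonempty) :
    ∃ m ∈ s, ∀ x ∈ s, ¬m < x := by
  obtain ⟨m, hm⟩ := Finset.exists_maximal h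
  exact ⟨m, hm.1, fun x hx hlt => hlt.not_ge (hm.2 hx hlt.le)⟩

private lemma aux_exists_minimal {α : Type*} [Preorder α] (s : Finset α) (h : s.Nonempty) :
    ∃ m ∈ s, ∀ x ∈ s, ¬x < m := by
  obtain ⟨m, hm⟩ := Finset.exists_minimal h
  exact ⟨m, hm.1, fun x hx hlt => hlt.not_ge (hm.2 hx hlt.le)⟩

private lemma aux_le_covBy {L : Type*} [Lattice L] [Fintype L] {z x : L} (h : z < x) :
    ∃ w, z ≤ w ∧ w ⋖ x := by
  classical
  obtain ⟨w, hw, hmax⟩ := aux_exists_maximal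
    (Finset.univ.filter fun w => z ≤ w ∧ w < x) ⟨z, by simp [h]⟩
  simp only [Finset.mem_filter, Finset.mem_univ, true_and] at hw hmax
  exact ⟨w, hw.1, hw.2, fun {u} hu hux => hmax u ⟨hw.1.trans hu.le, hux⟩ hu⟩

private lemma aux_covBy_le {L : Type*} [Lattice L] [Fintype L] {z x : L} (h : x < z) :
    ∃ w, w ≤ z ∧ x ⋖ w := by
  classical
  obtain ⟨w, hw, hmin⟩ := aux_exists_minimal
    (Finset.univ.filter fun w => w ≤ z ∧ x < w) ⟨z, by simp [h]⟩
  simp only [Finset.mem_filter, Finset.mem_univ, true_and] at hw hmin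
  exact ⟨w, hw.1, hw.2, fun {u} hu huw => hmin u ⟨(huw.le.trans hw.1), hu⟩ huw⟩

/-- Removing a doubly irreducible element `x`, incomparable to some element,
from a finite slim semimodular lattice yields a cover-preserving sublattice
that is again slim and semimodular. -/
theorem stmt_15 {L : Type*} [Lattice L] [Fintype L]
    (semimod : ∀ a b : L, a ⊓ b ⋖ a → b ⋖ a ⊔ b)
    (slim : ¬ ∃ a b c : L, SupIrred a ∧ SupIrred b ∧ SupIrred c ∧
      ¬ a ≤ b ∧ ¬ b ≤ a ∧ ¬ a ≤ c ∧ ¬ c ≤ a ∧ ¬ b ≤ c ∧ ¬ c ≤ b)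
    (x xlow xup : L)
    (hlow : xlow ⋖ x) (hlowu : ∀ z : L, z ⋖ x → z = xlow)
    (hup : x ⋖ xup) (hupu : ∀ z : L, x ⋖ z → z = xup)
    (hincomp : ∃ y : L, ¬ x ≤ y ∧ ¬ y ≤ x) :
    ∃ S : Sublattice L, (S : Set L) = {x}ᶜ ∧
      (∀ a b : ↥S, a ⋖ b → (a : L) ⋖ (b : L)) ∧
      (∀ a b : ↥S, a ⊓ b ⋖ a → b ⋖ a ⊔ b) ∧
      ¬ ∃ a b c : ↥S, SupIrred a ∧ SupIrred b ∧ SupIrred c ∧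
        ¬ a ≤ b ∧ ¬ b ≤ a ∧ ¬ a ≤ c ∧ ¬ c ≤ a ∧ ¬ b ≤ c ∧ ¬ c ≤ b := by
  classical
  obtain ⟨y, hxy, hyx⟩ := hincomp
  -- every element strictly below x is ≤ xlow, dually
  have hbelow : ∀ z : L, z < x → z ≤ xlow := by
    intro z hz
    obtain ⟨w, hzw, hwx⟩ := aux_le_covBy hz
    exact (hlowu w hwx) ▸ hzw
  have habove : ∀ z : L, x < z → xup ≤ z := by
    intro z hz
    obtain ⟨w, hwz, hxw⟩ := aux_covBy_le hz
    exact (hupu w hxw) ▸ hwz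
  -- find z with xlow ⋖ z ⋖ xup, z ≰ x
  obtain ⟨z, hz1, hz2, hzx⟩ : ∃ z : L, xlow ⋖ z ∧ z ⋖ xup ∧ ¬ z ≤ x := by
    obtain ⟨c', hc', hmin⟩ := aux_exists_minimal
      (Finset.univ.filter fun w => w ≤ y ∧ ¬ w ≤ x) ⟨y, by simp [hyx]⟩
    simp only [Finset.mem_filter, Finset.mem_univ, true_and] at hc' hmin
    have hinf : x ⊓ c' < c' := lt_of_le_of_ne inf_le_right
      (fun he => hc'.2 (he.symm.le.trans inf_le_left))
    obtain ⟨c, hc, hmax⟩ := aux_exists_maximal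
      (Finset.univ.filter fun w => w < c') ⟨x ⊓ c', by simp [hinf]⟩
    simp only [Finset.mem_filter, Finset.mem_univ, true_and] at hc hmax
    have hcov : c ⋖ c' := ⟨hc, fun {u} hcu huc' => hmax u huc' hcu⟩
    have hcx : c ≤ x := by
      by_contra h
      exact hmin c ⟨hc.le.trans hc'.1, h⟩ hc
    have hcne : c ≠ x := fun h => hxy (h ▸ (hc.le.trans hc'.1))
    have hcxlow : c ≤ xlow := hbelow c (lt_of_le_of_ne hcx hcne)
    -- c' ⊓ xlow = c
    have hkey : c' ⊓ xlow = c := by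
      have h1 : c ≤ c' ⊓ xlow := le_inf hc.le hcxlow
      rcases h1.lt_or_eq with h | h
      · exact absurd (lt_of_le_of_ne inf_le_left
          (fun he => hc'.2 (he.symm.le.trans (inf_le_right.trans hlow.le)))) (hcov.2 h)
      · exact h.symm
    have hz1 : xlow ⋖ xlow ⊔ c' := by
      have := semimod c' xlow (hkey ▸ hcov)
      rwa [sup_comm] at this
    set w := xlow ⊔ c' with hw
    have hwx : ¬ w ≤ x := fun h => hc'.2 ((le_sup_right.trans h))
    have hxw : x ⊓ w = xlow := by
      have h1 : xlow ≤ x ⊓ w := le_inf hlow.le le_sup_left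
      rcases h1.lt_or_eq with h | h
      · exact absurd (lt_of_le_of_ne inf_le_right (fun he => hwx (he.symm.le.trans inf_le_left)))
          (hz1.2 h)
      · exact h.symm
    have hz2 : w ⋖ x ⊔ w := semimod x w (hxw ▸ hlow)
    have hxup : x ⊔ w = xup := by
      apply hupu
      have := semimod w x (by rw [inf_comm, hxw]; exact hz1)
      rwa [sup_comm] at this
    exact ⟨w, hz1, hxup ▸ hz2, hwx⟩
  have hzne : z ≠ x := fun h => hzx (h ▸ le_refl x)
  -- the sublattice
  have supC : SupClosed ({x}ᶜ : Set L) := by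
    intro a ha b hb hab
    rw [Set.mem_compl_singleton_iff] at ha hb
    rw [Set.mem_singleton_iff] at hab
    have hax : a ≤ xlow := hbelow a (lt_of_le_of_ne (hab ▸ le_sup_left) ha)
    have hbx : b ≤ xlow := hbelow b (lt_of_le_of_ne (hab ▸ le_sup_right) hb)
    exact hlow.lt.not_ge (hab ▸ sup_le hax hbx)
  have infC : InfClosed ({x}ᶜ : Set L) := by
    intro a ha b hb hab
    rw [Set.mem_compl_singleton_iff] at ha hb
    rw [Set.mem_singleton_iff] at hab
    have hax : xup ≤ a := habove a (lt_of_le_of_ne (hab ▸ inf_le_left) (Ne.symm ha))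
    have hbx : xup ≤ b := habove b (lt_of_le_of_ne (hab ▸ inf_le_right) (Ne.symm hb))
    exact hup.lt.not_ge (hab ▸ le_inf hax hbx)
  refine ⟨⟨{x}ᶜ, supC, infC⟩, rfl, ?_⟩
  set S : Sublattice L := ⟨{x}ᶜ, supC, infC⟩ with hS
  have hmem : ∀ p : ↥S, (p : L) ≠ x := fun p => p.2
  -- cover preservation
  have covpres : ∀ a b : ↥S, a ⋖ b → (a : L) ⋖ (b : L) := by
    intro a b hab
    refine ⟨Subtype.coe_lt_coe.2 hab.1, ?_⟩
    intro c h1 h2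
    by_cases hcx : c = x
    · rw [hcx] at h1 h2
      have ha' : (a : L) ≤ xlow := hbelow _ h1
      have hb' : xup ≤ (b : L) := habove _ h2
      rcases ha'.lt_or_eq with h | h
      · exact hab.2 (c := ⟨xlow, hlow.lt.ne⟩) (Subtype.coe_lt_coe.1 h)
          (Subtype.coe_lt_coe.1 (lt_of_lt_of_le (hlow.lt.trans hup.lt) hb'))
      · rcases lt_or_eq_of_le hb' with h' | h'
        · exact hab.2 (c := ⟨xup, hup.lt.ne'⟩)
            (Subtype.coe_lt_coe.1 (h ▸ (hlow.lt.trans hup.lt)))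
            (Subtype.coe_lt_coe.1 h')
        · exact hab.2 (c := ⟨z, hzne⟩)
            (Subtype.coe_lt_coe.1 (h ▸ hz1.lt))
            (Subtype.coe_lt_coe.1 (h' ▸ hz2.lt))
    · exact hab.2 (c := ⟨c, hcx⟩) (Subtype.coe_lt_coe.1 h1) (Subtype.coe_lt_coe.1 h2)
  have covlift : ∀ a b : ↥S, (a : L) ⋖ (b : L) → a ⋖ b := by
    intro a b h
    exact ⟨Subtype.coe_lt_coe.1 h.1,
      fun {c} h1 h2 => h.2 (Subtype.coe_lt_coe.2 h1) (Subtype.coe_lt_coe.2 h2)⟩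
  refine ⟨covpres, ?_, ?_⟩
  · -- semimodularity
    intro a b h
    have h2 : (a : L) ⊓ (b : L) ⋖ (a : L) := covpres _ _ h
    exact covlift _ _ (semimod (a : L) (b : L) h2)
  · -- slimness
    have irredx : SupIrred x := by
      refine ⟨fun h => hlow.lt.not_ge (h hlow.lt.le), ?_⟩
      intro u v huv
      by_contra hcon
      push_neg at hcon
      have hu : u ≤ xlow := hbelow u (lt_of_le_of_ne (huv ▸ le_sup_left) hcon.1)
      have hv : v ≤ xlow := hbelow v (lt_of_le_of_ne (huv ▸ le_sup_right) hcon.2)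
      exact hlow.lt.not_ge (huv ▸ sup_le hu hv)
    have liftIrr : ∀ p : ↥S, SupIrred p → (p : L) ≠ xup → SupIrred (p : L) := by
      intro p hp hne
      refine ⟨fun h => hp.1 (fun {q} hq => Subtype.coe_le_coe.1 (h (Subtype.coe_le_coe.2 hq))), ?_⟩
      intro u v huv
      by_contra hcon
      push_neg at hcon
      obtain ⟨hu, hv⟩ := hcon
      have key : ∀ u v : L, u = x → u ⊔ v = (p : L) → v ≠ (p : L) → False := by
        intro u v hux huv hv
        rw [hux] at huv
        have hxp : x < (p : L) :=
          lt_of_le_of_ne (huv ▸ le_sup_left) (fun h => hmem p h.symm)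
        have hvx : v ≠ x := fun h => by
          rw [h, sup_idem] at huv
          exact hmem p huv.symm
        have heq : xup ⊔ v = (p : L) := by
          refine le_antisymm (sup_le (habove _ hxp) (huv ▸ le_sup_right)) ?_
          rw [← huv]
          exact sup_le_sup_right hup.le v
        have h5 : (⟨xup, hup.lt.ne'⟩ : ↥S) ⊔ ⟨v, hvx⟩ = p := Subtype.ext heq
        rcases hp.2 h5 with h | h
        · exact hne (congrArg Subtype.val h).symm
        · exact hv (congrArg Subtype.val h)
      by_cases hux : u = x
      · exact key u v hux huv hv
      · by_cases hvx : v = x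
        · exact key v u hvx (sup_comm u v ▸ huv) hu
        · have h5 : (⟨u, hux⟩ : ↥S) ⊔ ⟨v, hvx⟩ = p := Subtype.ext huv
          rcases hp.2 h5 with h | h
          · exact hu (congrArg Subtype.val h)
          · exact hv (congrArg Subtype.val h)
    rintro ⟨a, b, c, ha, hb, hc, nab, nba, nac, nca, nbc, ncb⟩
    have nab' : ¬ (a : L) ≤ (b : L) := fun h => nab (Subtype.coe_le_coe.1 h)
    have nba' : ¬ (b : L) ≤ (a : L) := fun h => nba (Subtype.coe_le_coe.1 h)
    have nac' : ¬ (a : L) ≤ (c : L) := fun h => nac (Subtype.coe_le_coe.1 h)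
    have nca' : ¬ (c : L) ≤ (a : L) := fun h => nca (Subtype.coe_le_coe.1 h)
    have nbc' : ¬ (b : L) ≤ (c : L) := fun h => nbc (Subtype.coe_le_coe.1 h)
    have ncb' : ¬ (c : L) ≤ (b : L) := fun h => ncb (Subtype.coe_le_coe.1 h)
    -- if an element equals xup, replace it by x; comparisons with others preserved
    have swapx : ∀ q : ↥S, ¬ (q : L) ≤ xup → ¬ xup ≤ (q : L) →
        ¬ (q : L) ≤ x ∧ ¬ x ≤ (q : L) := by
      intro q h1 h2
      refine ⟨fun h => h1 (h.trans hup.le), fun h => h2 ?_⟩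
      exact habove _ (lt_of_le_of_ne h (fun he => hmem q he.symm))
    by_cases hA : (a : L) = xup
    · have hBne : (b : L) ≠ xup := fun h => nba' (h ▸ hA ▸ le_refl _)
      have hCne : (c : L) ≠ xup := fun h => nca' (h ▸ hA ▸ le_refl _)
      obtain ⟨h1, h2⟩ := swapx b (hA ▸ nba') (hA ▸ nab')
      obtain ⟨h3, h4⟩ := swapx c (hA ▸ nca') (hA ▸ nac')
      exact slim ⟨x, (b : L), (c : L), irredx, liftIrr b hb hBne, liftIrr c hc hCne,
        h2, h1, h4, h3, nbc', ncb'⟩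
    · by_cases hB : (b : L) = xup
      · have hAne : (a : L) ≠ xup := fun h => nab' (h ▸ hB ▸ le_refl _)
        have hCne : (c : L) ≠ xup := fun h => ncb' (h ▸ hB ▸ le_refl _)
        obtain ⟨h1, h2⟩ := swapx a (hB ▸ nab') (hB ▸ nba')
        obtain ⟨h3, h4⟩ := swapx c (hB ▸ ncb') (hB ▸ nbc')
        exact slim ⟨(a : L), x, (c : L), liftIrr a ha hAne, irredx, liftIrr c hc hCne,
          h1, h2, nac', nca', h4, h3⟩
      · by_cases hC : (c : L) = xup
        · have hAne : (a : L) ≠ xup := fun h => nac' (h ▸ hC ▸ le_refl _)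
          have hBne : (b : L) ≠ xup := fun h => nbc' (h ▸ hC ▸ le_refl _)
          obtain ⟨h1, h2⟩ := swapx a (hC ▸ nac') (hC ▸ nca')
          obtain ⟨h3, h4⟩ := swapx b (hC ▸ nbc') (hC ▸ ncb')
          exact slim ⟨(a : L), (b : L), x, liftIrr a ha hAne, liftIrr b hb hBne, irredx,
            nab', nba', h1, h2, h3, h4⟩
        · exact slim ⟨(a : L), (b : L), (c : L), liftIrr a ha hA, liftIrr b hb hB,
            liftIrr c hc hC, nab', nba', nac', nca', nbc', ncb'⟩
end
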